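/- (Wigner phase of the massless canonical representation.) Let A = [[a,b],[c,d]] ∈ SL(2,ℂ), let p ∈ Lk, and suppose the 4-vector q determined by the Hermitian matrix Q := A⁻¹ P (A⁻¹)* (i.e. Q = [[q₀+q₃, q₁−iq₂],[q₁+iq₂, q₀−q₃]]) also lies in Lk. Then the matrix H_p⁻¹ · A · H_q belongs to E(2), the complex number w := −b(p₁+ip₂) + d(p₀+p₃) is nonzero, and the (2,2) entry of H_p⁻¹ · A · H_q equals w/|w|, i.e. e^{−iθ(A,p)/2} := (H_p⁻¹ A H_q)₂₂ = (−b(p₁+ip₂)+d(p₀+p₃)) / |−b(p₁+ip₂)+d(p₀+p₃)|. -/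

import Mathlib

open Matrix

/-- The mantle of the forward light cone with the ray `p₃ = −p₀` removed. -/
def Lk : Set (Fin 4 → ℝ) :=
  {p | 0 < p 0 ∧ (p 0) ^ 2 = (p 1) ^ 2 + (p 2) ^ 2 + (p 3) ^ 2 ∧ 0 < p 0 + p 3}

/-- The Hermitian matrix `P` associated to a 4-vector `p`. -/
noncomputable def Pmat (p : Fin 4 → ℝ) : Matrix (Fin 2) (Fin 2) ℂ :=
  !![((p 0 + p 3 : ℝ) : ℂ), (p 1 : ℂ) - (p 2 : ℂ) * Complex.I;
     (p 1 : ℂ) + (p 2 : ℂ) * Complex.I, ((p 0 - p 3 : ℝ) : ℂ)]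

/-- The matrix `H_p` for `p ∈ Lk`. -/
noncomputable def Hmat (p : Fin 4 → ℝ) : Matrix (Fin 2) (Fin 2) ℂ :=
  (((Real.sqrt (2 * p 0 * (p 0 + p 3)))⁻¹ : ℝ) : ℂ) •
    !![-((Real.sqrt (p 0) : ℂ)) * ((p 0 + p 3 : ℝ) : ℂ),
        ((p 1 : ℂ) - (p 2 : ℂ) * Complex.I) / ((Real.sqrt (p 0) : ℝ) : ℂ);
       -((Real.sqrt (p 0) : ℂ)) * ((p 1 : ℂ) + (p 2 : ℂ) * Complex.I),
        -(((p 0 + p 3 : ℝ) : ℂ) / ((Real.sqrt (p 0) : ℝ) : ℂ))]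

/-- `E(2)`: matrices `A ∈ SL(2,ℂ)` with `A₂₁ = 0` and `|A₁₁| = 1`. -/
def E2 : Set (Matrix (Fin 2) (Fin 2) ℂ) :=
  {A | A.det = 1 ∧ A 1 0 = 0 ∧ ‖A 0 0‖ = 1}

/-- Explicit inverse of `Hmat`. -/
noncomputable def HmatInv (p : Fin 4 → ℝ) : Matrix (Fin 2) (Fin 2) ℂ :=
  (((Real.sqrt (2 * p 0 * (p 0 + p 3)))⁻¹ : ℝ) : ℂ) •
    !![-(((p 0 + p 3 : ℝ) : ℂ) / ((Real.sqrt (p 0) : ℝ) : ℂ)),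
        -(((p 1 : ℂ) - (p 2 : ℂ) * Complex.I) / ((Real.sqrt (p 0) : ℝ) : ℂ));
       ((Real.sqrt (p 0) : ℂ)) * ((p 1 : ℂ) + (p 2 : ℂ) * Complex.I),
        -((Real.sqrt (p 0) : ℂ)) * ((p 0 + p 3 : ℝ) : ℂ)]

lemma Hmul (p : Fin 4 → ℝ) (hp : p ∈ Lk) : Hmat p * HmatInv p = 1 := by
  obtain ⟨hp0, hpr, hpp⟩ := hp
  have hs2 : (0:ℝ) < 2 * p 0 * (p 0 + p 3) := by positivity
  have hrne : ((Real.sqrt (p 0) : ℝ) : ℂ) ≠ 0 := by norm_cast; positivity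
  have hsne : ((Real.sqrt (2 * p 0 * (p 0 + p 3)) : ℝ) : ℂ) ≠ 0 := by
    norm_cast; positivity
  have hsC : ((Real.sqrt (2 * p 0 * (p 0 + p 3)) : ℝ) : ℂ) ^ 2
      = 2 * (p 0 : ℂ) * ((p 0 : ℂ) + (p 3 : ℂ)) := by
    norm_cast; exact Real.sq_sqrt hs2.le
  have hprC : ((p 0 : ℝ) : ℂ) ^ 2 = (p 1:ℂ)^2 + (p 2:ℂ)^2 + (p 3:ℂ)^2 := by
    norm_cast
  have hI : (Complex.I)^2 = -1 := Complex.I_sq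
  ext i j
  rw [Matrix.mul_apply, Fin.sum_univ_two]
  fin_cases i <;> fin_cases j <;>
    simp only [Hmat, HmatInv, Matrix.smul_apply, Matrix.cons_val', Matrix.cons_val_zero,
      Matrix.cons_val_one, Matrix.head_cons, Matrix.head_fin_const, Matrix.empty_val',
      Matrix.cons_val_fin_one, Matrix.one_apply, smul_eq_mul] <;>
    norm_num
  · rw [show ((Real.sqrt (2 * p 0 * (p 0 + p 3)):ℝ):ℂ)⁻¹ * (((Real.sqrt (p 0):ℝ):ℂ) * ((p 0:ℂ) + (p 3:ℂ))) *
        (((Real.sqrt (2 * p 0 * (p 0 + p 3)):ℝ):ℂ)⁻¹ * (((p 0:ℂ) + (p 3:ℂ)) / ((Real.sqrt (p 0):ℝ):ℂ))) +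
      ((Real.sqrt (2 * p 0 * (p 0 + p 3)):ℝ):ℂ)⁻¹ * (((p 1:ℂ) - (p 2:ℂ) * Complex.I) / ((Real.sqrt (p 0):ℝ):ℂ)) *
        (((Real.sqrt (2 * p 0 * (p 0 + p 3)):ℝ):ℂ)⁻¹ * (((Real.sqrt (p 0):ℝ):ℂ) * ((p 1:ℂ) + (p 2:ℂ) * Complex.I)))
      = (((Real.sqrt (2 * p 0 * (p 0 + p 3)):ℝ):ℂ))⁻¹^2 * (((Real.sqrt (p 0):ℝ):ℂ) * ((Real.sqrt (p 0):ℝ):ℂ)⁻¹) *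
        (((p 0:ℂ) + (p 3:ℂ))^2 + ((p 1:ℂ) - (p 2:ℂ) * Complex.I) * ((p 1:ℂ) + (p 2:ℂ) * Complex.I)) from by ring]
    rw [mul_inv_cancel₀ hrne, mul_one, inv_pow, hsC, inv_mul_eq_one₀ (by
      rw [← hsC]; exact pow_ne_zero 2 hsne)]
    linear_combination hprC + (p 2:ℂ)^2 * hI
  · ring
  · ring
  · rw [show ((Real.sqrt (2 * p 0 * (p 0 + p 3)):ℝ):ℂ)⁻¹ * (((Real.sqrt (p 0):ℝ):ℂ) * ((p 1:ℂ) + (p 2:ℂ) * Complex.I)) *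
        (((Real.sqrt (2 * p 0 * (p 0 + p 3)):ℝ):ℂ)⁻¹ * (((p 1:ℂ) - (p 2:ℂ) * Complex.I) / ((Real.sqrt (p 0):ℝ):ℂ))) +
      ((Real.sqrt (2 * p 0 * (p 0 + p 3)):ℝ):ℂ)⁻¹ * (((p 0:ℂ) + (p 3:ℂ)) / ((Real.sqrt (p 0):ℝ):ℂ)) *
        (((Real.sqrt (2 * p 0 * (p 0 + p 3)):ℝ):ℂ)⁻¹ * (((Real.sqrt (p 0):ℝ):ℂ) * ((p 0:ℂ) + (p 3:ℂ))))
      = (((Real.sqrt (2 * p 0 * (p 0 + p 3)):ℝ):ℂ))⁻¹^2 * (((Real.sqrt (p 0):ℝ):ℂ) * ((Real.sqrt (p 0):ℝ):ℂ)⁻¹) *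
        (((p 0:ℂ) + (p 3:ℂ))^2 + ((p 1:ℂ) - (p 2:ℂ) * Complex.I) * ((p 1:ℂ) + (p 2:ℂ) * Complex.I)) from by ring]
    rw [mul_inv_cancel₀ hrne, mul_one, inv_pow, hsC, inv_mul_eq_one₀ (by
      rw [← hsC]; exact pow_ne_zero 2 hsne)]
    linear_combination hprC + (p 2:ℂ)^2 * hI

lemma inv_fin_two (a b c d : ℂ) (h : a * d - b * c = 1) :
    (!![a, b; c, d])⁻¹ = !![d, -b; -c, a] := by
  apply Matrix.inv_eq_right_inv
  rw [Matrix.mul_fin_two, Matrix.one_fin_two]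
  have e1 : a * d + b * -c = 1 := by linear_combination h
  have e2 : a * -b + b * a = 0 := by ring
  have e3 : c * d + d * -c = 0 := by ring
  have e4 : c * -b + d * a = 1 := by linear_combination h
  rw [e1, e2, e3, e4]

lemma Hdet (p : Fin 4 → ℝ) (hp : p ∈ Lk) : (Hmat p).det = 1 := by
  obtain ⟨hp0, hpr, hpp⟩ := hp
  have hs2 : (0:ℝ) < 2 * p 0 * (p 0 + p 3) := by positivity
  have hrne : ((Real.sqrt (p 0) : ℝ) : ℂ) ≠ 0 := by norm_cast; positivity
  have hsne : ((Real.sqrt (2 * p 0 * (p 0 + p 3)) : ℝ) : ℂ) ≠ 0 := by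
    norm_cast; positivity
  have hsC : ((Real.sqrt (2 * p 0 * (p 0 + p 3)) : ℝ) : ℂ) ^ 2
      = 2 * (p 0 : ℂ) * ((p 0 : ℂ) + (p 3 : ℂ)) := by
    norm_cast; exact Real.sq_sqrt hs2.le
  have hprC : ((p 0 : ℝ) : ℂ) ^ 2 = (p 1:ℂ)^2 + (p 2:ℂ)^2 + (p 3:ℂ)^2 := by
    norm_cast
  have hI : (Complex.I)^2 = -1 := Complex.I_sq
  rw [Matrix.det_fin_two]
  simp only [Hmat, Matrix.smul_apply, Matrix.of_apply, Matrix.cons_val', Matrix.cons_val_zero,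
    Matrix.cons_val_one, Matrix.head_cons, Matrix.head_fin_const, Matrix.empty_val',
    Matrix.cons_val_fin_one, smul_eq_mul]
  push_cast
  rw [show ((Real.sqrt (2 * p 0 * (p 0 + p 3)):ℝ):ℂ)⁻¹ * (-((Real.sqrt (p 0):ℝ):ℂ) * ((p 0:ℂ) + (p 3:ℂ))) *
      (((Real.sqrt (2 * p 0 * (p 0 + p 3)):ℝ):ℂ)⁻¹ * -(((p 0:ℂ) + (p 3:ℂ)) / ((Real.sqrt (p 0):ℝ):ℂ))) -
    ((Real.sqrt (2 * p 0 * (p 0 + p 3)):ℝ):ℂ)⁻¹ * (((p 1:ℂ) - (p 2:ℂ) * Complex.I) / ((Real.sqrt (p 0):ℝ):ℂ)) *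
      (((Real.sqrt (2 * p 0 * (p 0 + p 3)):ℝ):ℂ)⁻¹ * (-((Real.sqrt (p 0):ℝ):ℂ) * ((p 1:ℂ) + (p 2:ℂ) * Complex.I)))
    = (((Real.sqrt (2 * p 0 * (p 0 + p 3)):ℝ):ℂ))⁻¹^2 * (((Real.sqrt (p 0):ℝ):ℂ) * ((Real.sqrt (p 0):ℝ):ℂ)⁻¹) *
      (((p 0:ℂ) + (p 3:ℂ))^2 + ((p 1:ℂ) - (p 2:ℂ) * Complex.I) * ((p 1:ℂ) + (p 2:ℂ) * Complex.I)) from by ring]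
  rw [mul_inv_cancel₀ hrne, mul_one, inv_pow, hsC, inv_mul_eq_one₀ (by
    rw [← hsC]; exact pow_ne_zero 2 hsne)]
  linear_combination hprC + (p 2:ℂ)^2 * hI

/-- Wigner phase of the massless canonical representation: for `A ∈ SL(2,ℂ)` and
`p, q ∈ Lk` with `Q = A⁻¹P(A⁻¹)*`, the matrix `H_p⁻¹AH_q` lies in `E(2)`, the number
`w = −b(p₁+ip₂) + d(p₀+p₃)` is nonzero, and `(H_p⁻¹AH_q)₂₂ = w/|w|`. -/
theorem wigner_phase (A : Matrix (Fin 2) (Fin 2) ℂ) (hA : A.det = 1)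
    (p q : Fin 4 → ℝ) (hp : p ∈ Lk) (hq : q ∈ Lk)
    (hQ : A⁻¹ * Pmat p * (A⁻¹)ᴴ = Pmat q) :
    (Hmat p)⁻¹ * A * Hmat q ∈ E2 ∧
    -(A 0 1) * ((p 1 : ℂ) + (p 2 : ℂ) * Complex.I)
        + A 1 1 * ((p 0 + p 3 : ℝ) : ℂ) ≠ 0 ∧
    ((Hmat p)⁻¹ * A * Hmat q) 1 1
      = (-(A 0 1) * ((p 1 : ℂ) + (p 2 : ℂ) * Complex.I)
            + A 1 1 * ((p 0 + p 3 : ℝ) : ℂ))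
        / ((‖-(A 0 1) * ((p 1 : ℂ) + (p 2 : ℂ) * Complex.I)
            + A 1 1 * ((p 0 + p 3 : ℝ) : ℂ)‖ : ℝ) : ℂ) := by
  obtain ⟨hp0, hpr, hpp⟩ := hp
  obtain ⟨hq0, hqr, hqq⟩ := hq
  have hA' : A 0 0 * A 1 1 - A 0 1 * A 1 0 = 1 := by
    rw [← Matrix.det_fin_two]; exact hA
  have hAinv : A⁻¹ = !![A 1 1, -(A 0 1); -(A 1 0), A 0 0] := by
    conv_lhs => rw [Matrix.eta_fin_two A]
    exact inv_fin_two _ _ _ _ (by linear_combination hA')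
  rw [hAinv] at hQ
  have E00 := congrFun (congrFun hQ 0) 0
  have E01 := congrFun (congrFun hQ 0) 1
  have E11 := congrFun (congrFun hQ 1) 1
  simp only [Matrix.mul_apply, Fin.sum_univ_two, Matrix.conjTranspose_apply, Pmat,
    Matrix.of_apply, Matrix.cons_val', Matrix.cons_val_zero, Matrix.cons_val_one,
    Matrix.head_cons, Matrix.head_fin_const, Matrix.empty_val', Matrix.cons_val_fin_one,
    RCLike.star_def, map_neg, _root_.map_mul, map_sub, map_add, Complex.conj_ofReal,
    Complex.conj_I] at E00 E01 E11
  push_cast at E00 E01 E11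
  have hprC : ((p 0 : ℝ) : ℂ) ^ 2 = (p 1:ℂ)^2 + (p 2:ℂ)^2 + (p 3:ℂ)^2 := by norm_cast
  have hqrC : ((q 0 : ℝ) : ℂ) ^ 2 = (q 1:ℂ)^2 + (q 2:ℂ)^2 + (q 3:ℂ)^2 := by norm_cast
  have hI : (Complex.I)^2 = -1 := Complex.I_sq
  have F1 : ((q 0:ℂ) + (q 3:ℂ)) * ((p 0:ℂ) + (p 3:ℂ))
      = (-(A 0 1) * ((p 1:ℂ) + (p 2:ℂ)*Complex.I) + A 1 1 * ((p 0:ℂ) + (p 3:ℂ)))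
        * (-((starRingEnd ℂ) (A 0 1)) * ((p 1:ℂ) - (p 2:ℂ)*Complex.I)
            + (starRingEnd ℂ) (A 1 1) * ((p 0:ℂ) + (p 3:ℂ))) := by
    linear_combination (-((p 0:ℂ) + (p 3:ℂ))) * E00
      + (A 0 1 * (starRingEnd ℂ) (A 0 1)) * hprC
      + (A 0 1 * (starRingEnd ℂ) (A 0 1) * (p 2:ℂ)^2) * hI
  have F2 : ((q 1:ℂ) - (q 2:ℂ)*Complex.I) * ((p 0:ℂ) + (p 3:ℂ))
      = (-(A 0 1) * ((p 1:ℂ) + (p 2:ℂ)*Complex.I) + A 1 1 * ((p 0:ℂ) + (p 3:ℂ)))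
        * ((starRingEnd ℂ) (A 0 0) * ((p 1:ℂ) - (p 2:ℂ)*Complex.I)
            - (starRingEnd ℂ) (A 1 0) * ((p 0:ℂ) + (p 3:ℂ))) := by
    linear_combination (-((p 0:ℂ) + (p 3:ℂ))) * E01
      - (A 0 1 * (starRingEnd ℂ) (A 0 0)) * hprC
      - (A 0 1 * (starRingEnd ℂ) (A 0 0) * (p 2:ℂ)^2) * hI
  have F3 : ((q 0:ℂ) - (q 3:ℂ)) * ((p 0:ℂ) + (p 3:ℂ))
      = (A 0 0 * ((p 1:ℂ) + (p 2:ℂ)*Complex.I) - A 1 0 * ((p 0:ℂ) + (p 3:ℂ)))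
        * ((starRingEnd ℂ) (A 0 0) * ((p 1:ℂ) - (p 2:ℂ)*Complex.I)
            - (starRingEnd ℂ) (A 1 0) * ((p 0:ℂ) + (p 3:ℂ))) := by
    linear_combination (-((p 0:ℂ) + (p 3:ℂ))) * E11
      + (A 0 0 * (starRingEnd ℂ) (A 0 0)) * hprC
      + (A 0 0 * (starRingEnd ℂ) (A 0 0) * (p 2:ℂ)^2) * hI
  -- abbreviation facts
  have ppne : ((p 0:ℂ) + (p 3:ℂ)) ≠ 0 := by
    have : (p 0 + p 3 : ℝ) ≠ 0 := ne_of_gt hpp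
    exact_mod_cast this
  set w : ℂ := -(A 0 1) * ((p 1:ℂ) + (p 2:ℂ)*Complex.I) + A 1 1 * ((p 0 + p 3 : ℝ):ℂ)
    with hwdef
  have hw' : w = -(A 0 1) * ((p 1:ℂ) + (p 2:ℂ)*Complex.I) + A 1 1 * ((p 0:ℂ) + (p 3:ℂ)) := by
    rw [hwdef]; push_cast; ring
  have hcw : (starRingEnd ℂ) w
      = -((starRingEnd ℂ) (A 0 1)) * ((p 1:ℂ) - (p 2:ℂ)*Complex.I)
          + (starRingEnd ℂ) (A 1 1) * ((p 0:ℂ) + (p 3:ℂ)) := by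
    rw [hw']
    simp only [map_add, _root_.map_mul, map_neg, Complex.conj_ofReal, Complex.conj_I]
    push_cast
    ring
  have F1' : ((q 0:ℂ) + (q 3:ℂ)) * ((p 0:ℂ) + (p 3:ℂ)) = w * (starRingEnd ℂ) w := by
    rw [hcw, hw']; exact F1
  have hnormSq : Complex.normSq w = (q 0 + q 3) * (p 0 + p 3) := by
    have : ((Complex.normSq w : ℝ) : ℂ) = (((q 0 + q 3) * (p 0 + p 3) : ℝ) : ℂ) := by
      rw [← Complex.mul_conj, ← F1']; push_cast; ring
    exact_mod_cast this
  have wne : w ≠ 0 := by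
    intro h
    rw [h, map_zero] at hnormSq
    nlinarith [hnormSq]
  have habs : ‖w‖ = Real.sqrt (p 0 + p 3) * Real.sqrt (q 0 + q 3) := by
    rw [Complex.norm_def, hnormSq, Real.sqrt_mul (by positivity), mul_comm]
  set g : ℂ := A 0 0 * ((p 1:ℂ) + (p 2:ℂ)*Complex.I) - A 1 0 * ((p 0:ℂ) + (p 3:ℂ))
    with hgdef
  have hcg : (starRingEnd ℂ) g
      = (starRingEnd ℂ) (A 0 0) * ((p 1:ℂ) - (p 2:ℂ)*Complex.I)
          - (starRingEnd ℂ) (A 1 0) * ((p 0:ℂ) + (p 3:ℂ)) := by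
    rw [hgdef]
    simp only [map_sub, map_add, _root_.map_mul, Complex.conj_ofReal, Complex.conj_I]
    push_cast
    ring
  have F2' : ((q 1:ℂ) - (q 2:ℂ)*Complex.I) * ((p 0:ℂ) + (p 3:ℂ)) = w * (starRingEnd ℂ) g := by
    rw [hcg, hw']; exact F2
  have F3' : ((q 0:ℂ) - (q 3:ℂ)) * ((p 0:ℂ) + (p 3:ℂ)) = g * (starRingEnd ℂ) g := by
    rw [hcg, hgdef]; exact F3
  have F2c : ((q 1:ℂ) + (q 2:ℂ)*Complex.I) * ((p 0:ℂ) + (p 3:ℂ)) = (starRingEnd ℂ) w * g := by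
    have := congrArg (starRingEnd ℂ) F2'
    simpa only [_root_.map_mul, map_sub, map_add, Complex.conj_ofReal, Complex.conj_I,
      Complex.conj_conj, mul_neg, neg_mul, neg_neg, sub_neg_eq_add] using this
  have key10 : w * ((q 1:ℂ) + (q 2:ℂ)*Complex.I) = g * ((q 0:ℂ) + (q 3:ℂ)) := by
    apply mul_right_cancel₀ ppne
    linear_combination w * F2c - g * F1'
  have key11 : g * ((q 1:ℂ) - (q 2:ℂ)*Complex.I) = w * ((q 0:ℂ) - (q 3:ℂ)) := by
    apply mul_right_cancel₀ ppne
    linear_combination g * F2' - w * F3'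
  have hplk : p ∈ Lk := ⟨hp0, hpr, hpp⟩
  have hqlk : q ∈ Lk := ⟨hq0, hqr, hqq⟩
  have hM : (Hmat p)⁻¹ = HmatInv p := Matrix.inv_eq_right_inv (Hmul p hplk)
  have hdetHinv : (HmatInv p).det = 1 := by
    have h := congrArg Matrix.det (Hmul p hplk)
    rw [Matrix.det_mul, Hdet p hplk, one_mul, Matrix.det_one] at h
    exact h
  have hdet : ((Hmat p)⁻¹ * A * Hmat q).det = 1 := by
    rw [Matrix.det_mul, Matrix.det_mul, hM, hdetHinv, hA, Hdet q hqlk]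
    norm_num
  rw [hwdef, hgdef] at key10 key11
  push_cast at key10 key11
  have hM10 : ((Hmat p)⁻¹ * A * Hmat q) 1 0 = 0 := by
    rw [hM]
    simp only [Matrix.mul_apply, Fin.sum_univ_two, HmatInv, Hmat, Matrix.smul_apply,
      Matrix.of_apply, Matrix.cons_val', Matrix.cons_val_zero, Matrix.cons_val_one,
      Matrix.head_cons, Matrix.head_fin_const, Matrix.empty_val', Matrix.cons_val_fin_one,
      smul_eq_mul]
    push_cast
    linear_combination (((Real.sqrt (2*p 0*(p 0+p 3)) : ℝ):ℂ))⁻¹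
      * (((Real.sqrt (2*q 0*(q 0+q 3)) : ℝ):ℂ))⁻¹
      * ((Real.sqrt (p 0) : ℝ):ℂ) * ((Real.sqrt (q 0) : ℝ):ℂ) * key10
  have hcoef : (Real.sqrt (2*p 0*(p 0+p 3)))⁻¹ * (Real.sqrt (2*q 0*(q 0+q 3)))⁻¹
      * Real.sqrt (p 0) * (Real.sqrt (q 0))⁻¹ * (2 * q 0)
      * (Real.sqrt (p 0 + p 3) * Real.sqrt (q 0 + q 3)) = 1 := by
    rw [Real.sqrt_mul (by positivity : (0:ℝ) ≤ 2 * p 0),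
        Real.sqrt_mul (by positivity : (0:ℝ) ≤ 2 * q 0),
        Real.sqrt_mul (by norm_num : (0:ℝ) ≤ 2) (p 0),
        Real.sqrt_mul (by norm_num : (0:ℝ) ≤ 2) (q 0)]
    have s2 : Real.sqrt 2 * Real.sqrt 2 = 2 := Real.mul_self_sqrt (by norm_num)
    have sq0 : Real.sqrt (q 0) * Real.sqrt (q 0) = q 0 := Real.mul_self_sqrt hq0.le
    have h1 : (0:ℝ) < Real.sqrt 2 := by positivity
    have h2 : (0:ℝ) < Real.sqrt (p 0) := by positivity
    have h3 : (0:ℝ) < Real.sqrt (q 0) := by positivity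
    have h4 : (0:ℝ) < Real.sqrt (p 0 + p 3) := by positivity
    have h5 : (0:ℝ) < Real.sqrt (q 0 + q 3) := by positivity
    field_simp
    linear_combination
      (-(Real.sqrt (q 0) * Real.sqrt (q 0))) * s2 - 2 * sq0
  have hcoefC : (((Real.sqrt (2*p 0*(p 0+p 3)) : ℝ):ℂ))⁻¹
      * (((Real.sqrt (2*q 0*(q 0+q 3)) : ℝ):ℂ))⁻¹
      * ((Real.sqrt (p 0) : ℝ):ℂ) * (((Real.sqrt (q 0) : ℝ):ℂ))⁻¹ * (2 * ((q 0 : ℝ):ℂ))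
      * (((Real.sqrt (p 0 + p 3) : ℝ):ℂ) * ((Real.sqrt (q 0 + q 3) : ℝ):ℂ)) = 1 := by
    exact_mod_cast hcoef
  have cne : (((Real.sqrt (p 0 + p 3) * Real.sqrt (q 0 + q 3) : ℝ)):ℂ) ≠ 0 := by
    norm_cast
    positivity
  have hfin : ((Hmat p)⁻¹ * A * Hmat q) 1 1 = w / ((‖w‖ : ℝ):ℂ) := by
    rw [habs, eq_div_iff cne, hM, hwdef]
    simp only [Matrix.mul_apply, Fin.sum_univ_two, HmatInv, Hmat, Matrix.smul_apply,
      Matrix.of_apply, Matrix.cons_val', Matrix.cons_val_zero, Matrix.cons_val_one,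
      Matrix.head_cons, Matrix.head_fin_const, Matrix.empty_val', Matrix.cons_val_fin_one,
      smul_eq_mul]
    push_cast
    linear_combination ((((Real.sqrt (2*p 0*(p 0+p 3)) : ℝ):ℂ))⁻¹
        * (((Real.sqrt (2*q 0*(q 0+q 3)) : ℝ):ℂ))⁻¹
        * ((Real.sqrt (p 0) : ℝ):ℂ) * (((Real.sqrt (q 0) : ℝ):ℂ))⁻¹
        * ((Real.sqrt (p 0 + p 3) : ℝ):ℂ) * ((Real.sqrt (q 0 + q 3) : ℝ):ℂ)) * key11
      + (-(A 0 1) * ((p 1:ℂ) + (p 2:ℂ)*Complex.I) + A 1 1 * ((p 0:ℂ) + (p 3:ℂ))) * hcoefC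
  have h11abs : ‖((Hmat p)⁻¹ * A * Hmat q) 1 1‖ = 1 := by
    rw [hfin, norm_div, Complex.norm_real, norm_norm, div_self (norm_ne_zero_iff.mpr wne)]
  have h00 : ‖((Hmat p)⁻¹ * A * Hmat q) 0 0‖ = 1 := by
    rw [Matrix.det_fin_two] at hdet
    rw [hM10, mul_zero, sub_zero] at hdet
    have := congrArg (‖·‖) hdet
    simp only [norm_mul, norm_one] at this
    rw [h11abs, mul_one] at this
    exact this
  exact ⟨⟨hdet, hM10, h00⟩, wne, hfin⟩
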